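/- Let G = (V,E) be a graph, K ∈ ℕ^E with |K| := ∑_e K(e) = |E|, and let C_G(K) be the |E|×|E| matrix whose columns consist of K(e) copies of the e-th column of C_G. Then coe(x^K, P_G) = (1/K!)·per(C_G(K)), where P_G = ∏_{e={i,j}∈E, i<j} (∑_{e'∋i} x_{e'} − ∑_{e'∋j} x_{e'}) is a homogeneous polynomial of degree |E| in the edge variables {x_e : e ∈ E}. -/

import Mathlib

open MvPolynomial Matrix

def permFiberEquiv {E : Type} [DecidableEq E] (c g : E → E) :
    {σ : Equiv.Perm E // ∀ x, c (σ x) = g x} ≃ (∀ e, {x // g x = e} ≃ {x // c x = e}) where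
  toFun σ e :=
    { toFun := fun x => ⟨σ.1 x.1, by rw [σ.2 x.1, x.2]⟩
      invFun := fun y => ⟨σ.1.symm y.1,
        by rw [← σ.2 (σ.1.symm y.1), Equiv.apply_symm_apply, y.2]⟩
      left_inv := fun x => Subtype.ext (σ.1.symm_apply_apply x.1)
      right_inv := fun y => Subtype.ext (σ.1.apply_symm_apply y.1) }
  invFun b :=
    ⟨(Equiv.sigmaFiberEquiv g).symm.trans
      ((Equiv.sigmaCongrRight b).trans (Equiv.sigmaFiberEquiv c)),
      fun x => (b (g x) ⟨x, rfl⟩).2⟩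
  left_inv σ := Subtype.ext (Equiv.ext fun x => rfl)
  right_inv b := by
    funext e
    ext x
    obtain ⟨x, rfl⟩ := x
    rfl

lemma count_perm {E : Type} [Fintype E] [DecidableEq E] (c g : E → E) (K : E → ℕ)
    (hc : ∀ e, (Finset.univ.filter fun f => c f = e).card = K e)
    (hg : ∀ e, (Finset.univ.filter fun f => g f = e).card = K e) :
    (Finset.univ.filter fun σ : Equiv.Perm E => ∀ x, c (σ x) = g x).card
      = ∏ e, Nat.factorial (K e) := by
  classical
  rw [← Fintype.card_subtype, Fintype.card_congr (permFiberEquiv c g), Fintype.card_pi]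
  refine Finset.prod_congr rfl fun e _ => ?_
  have h1 : Fintype.card {x // g x = e} = K e := by
    rw [Fintype.card_subtype]; exact hg e
  have h2 : Fintype.card {x // c x = e} = K e := by
    rw [Fintype.card_subtype]; exact hc e
  rw [Fintype.card_equiv (Fintype.equivOfCardEq (h1.trans h2.symm)), h1]

lemma prod_X_monomial {σ R : Type} [CommSemiring R] [DecidableEq σ] {ι : Type} (s : Finset ι)
    (g : ι → σ) :
    ∏ i ∈ s, (X (g i) : MvPolynomial σ R) = monomial (∑ i ∈ s, Finsupp.single (g i) 1) 1 := by
  induction s using Finset.cons_induction with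
  | empty => simp
  | cons a s ha ih =>
      rw [Finset.prod_cons, Finset.sum_cons, ih, X, monomial_mul, one_mul]

theorem stmt11 (n : ℕ) (E : Type) [Fintype E] [DecidableEq E]
    (ends : E → Fin n × Fin n)
    (horder : ∀ e, (ends e).1 < (ends e).2)
    (hinj : Function.Injective ends)
    (C : Matrix E E ℂ)
    (hC : ∀ e e', C e e' =
        (if (ends e).1 = (ends e').1 ∨ (ends e).1 = (ends e').2 then 1 else 0)
          - (if (ends e).2 = (ends e').1 ∨ (ends e).2 = (ends e').2 then 1 else 0))
    (K : E → ℕ) (hK : ∑ e, K e = Fintype.card E)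
    (c : E → E)
    (hc : ∀ e, (Finset.univ.filter fun f => c f = e).card = K e) :
    MvPolynomial.coeff (Finsupp.equivFunOnFinite.symm K)
        (∏ e : E,
          ((∑ e' ∈ Finset.univ.filter
              (fun e' : E => (ends e').1 = (ends e).1 ∨ (ends e').2 = (ends e).1),
              MvPolynomial.X e')
            - (∑ e' ∈ Finset.univ.filter
              (fun e' : E => (ends e').1 = (ends e).2 ∨ (ends e').2 = (ends e).2),
              (MvPolynomial.X e' : MvPolynomial E ℂ))))
      = ((∏ e, Nat.factorial (K e) : ℕ) : ℂ)⁻¹ *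
          Matrix.permanent (Matrix.of fun e f => C e (c f)) := by
  classical
  set S : Finset (E → E) :=
    Finset.univ.filter (fun g : E → E => ∀ e, (Finset.univ.filter fun x => g x = e).card = K e)
    with hS
  -- Step 1: the LHS equals ∑ g in S, ∏ e, C e (g e)
  have hfac : ∀ e : E,
      ((∑ e' ∈ Finset.univ.filter
          (fun e' : E => (ends e').1 = (ends e).1 ∨ (ends e').2 = (ends e).1),
          MvPolynomial.X e')
        - (∑ e' ∈ Finset.univ.filter
          (fun e' : E => (ends e').1 = (ends e).2 ∨ (ends e').2 = (ends e).2),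
          (MvPolynomial.X e' : MvPolynomial E ℂ)))
      = ∑ e' : E, MvPolynomial.C (C e e') * MvPolynomial.X e' := by
    intro e
    rw [Finset.sum_filter, Finset.sum_filter, ← Finset.sum_sub_distrib]
    refine Finset.sum_congr rfl fun e' _ => ?_
    rw [hC e e', map_sub, sub_mul]
    congr 1
    · by_cases h : (ends e).1 = (ends e').1 ∨ (ends e).1 = (ends e').2
      · rw [if_pos h, if_pos (h.imp Eq.symm Eq.symm), MvPolynomial.C_1, one_mul]
      · rw [if_neg h, if_neg (fun h' => h (h'.imp Eq.symm Eq.symm)), MvPolynomial.C_0, zero_mul]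
    · by_cases h : (ends e).2 = (ends e').1 ∨ (ends e).2 = (ends e').2
      · rw [if_pos h, if_pos (h.imp Eq.symm Eq.symm), MvPolynomial.C_1, one_mul]
      · rw [if_neg h, if_neg (fun h' => h (h'.imp Eq.symm Eq.symm)), MvPolynomial.C_0, zero_mul]
  have hexpand :
      (∏ e : E,
        ((∑ e' ∈ Finset.univ.filter
            (fun e' : E => (ends e').1 = (ends e).1 ∨ (ends e').2 = (ends e).1),
            MvPolynomial.X e')
          - (∑ e' ∈ Finset.univ.filter
            (fun e' : E => (ends e').1 = (ends e).2 ∨ (ends e').2 = (ends e).2),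
            (MvPolynomial.X e' : MvPolynomial E ℂ))))
      = ∑ g : E → E,
          MvPolynomial.monomial (∑ e, Finsupp.single (g e) 1) (∏ e, C e (g e)) := by
    rw [Finset.prod_congr rfl fun e _ => hfac e, Finset.prod_univ_sum]
    refine Finset.sum_congr rfl fun g _ => ?_
    rw [Finset.prod_mul_distrib, ← map_prod, prod_X_monomial, C_mul_monomial, mul_one]
  rw [hexpand, MvPolynomial.coeff_sum]
  have hcond : ∀ g : E → E,
      ((∑ e, Finsupp.single (g e) 1 : E →₀ ℕ) = Finsupp.equivFunOnFinite.symm K)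
        ↔ ∀ e', (Finset.univ.filter fun x => g x = e').card = K e' := by
    intro g
    rw [Finsupp.ext_iff]
    refine forall_congr' fun e' => ?_
    have h1 : (∑ e, Finsupp.single (g e) 1 : E →₀ ℕ) e'
        = (Finset.univ.filter fun x => g x = e').card := by
      rw [Finsupp.finset_sum_apply, Finset.card_filter]
      exact Finset.sum_congr rfl fun x _ => by rw [Finsupp.single_apply]
    rw [h1]
    rfl
  have hL : ∀ g : E → E,
      MvPolynomial.coeff (Finsupp.equivFunOnFinite.symm K)
        (MvPolynomial.monomial (∑ e, Finsupp.single (g e) 1) (∏ e, C e (g e)))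
      = if (∀ e', (Finset.univ.filter fun x => g x = e').card = K e')
          then ∏ e, C e (g e) else 0 := by
    intro g
    rw [MvPolynomial.coeff_monomial, if_congr (hcond g) rfl rfl]
  rw [Finset.sum_congr rfl fun g _ => hL g, ← Finset.sum_filter, ← hS]
  -- Step 2: the permanent equals ∑ σ, ∏ i, C i (c (σ i))
  have hper : Matrix.permanent (Matrix.of fun e f => C e (c f))
      = ∑ σ : Equiv.Perm E, ∏ i, C i (c (σ i)) := by
    have key : ∀ σ : Equiv.Perm E, ∏ i, C i (c (σ i)) = ∏ i, C (σ.symm i) (c i) := by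
      intro σ
      rw [← Equiv.prod_comp σ (fun j => C (σ.symm j) (c j))]
      exact Finset.prod_congr rfl fun i _ => by rw [Equiv.symm_apply_apply]
    rw [Matrix.permanent]
    refine (Fintype.sum_equiv (Equiv.inv (Equiv.Perm E)) _ _ fun σ => ?_).symm
    exact (key σ).trans rfl
  -- Step 3: group permutations by c ∘ σ
  have hfib : ∀ (σ : Equiv.Perm E) (e : E),
      (Finset.univ.filter fun x => c (σ x) = e).card = K e := by
    intro σ e
    rw [← hc e]
    refine Finset.card_bij (fun x _ => σ x) ?_ ?_ ?_
    · intro a ha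
      simp only [Finset.mem_filter, Finset.mem_univ, true_and] at ha ⊢
      exact ha
    · intro a _ b _ h
      exact σ.injective h
    · intro b hb
      simp only [Finset.mem_filter, Finset.mem_univ, true_and] at hb
      exact ⟨σ.symm b, by simp [Finset.mem_filter, hb], σ.apply_symm_apply b⟩
  have hgroup : ∑ σ : Equiv.Perm E, ∏ i, C i (c (σ i))
      = ∑ g ∈ S, ((∏ e, Nat.factorial (K e) : ℕ) : ℂ) * ∏ e, C e (g e) := by
    rw [← Finset.sum_fiberwise_of_maps_to (t := S)
      (g := fun σ : Equiv.Perm E => fun x => c (σ x))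
      (fun σ _ => by
        simp only [hS, Finset.mem_filter, Finset.mem_univ, true_and]
        exact hfib σ)]
    refine Finset.sum_congr rfl fun g hg => ?_
    have hgK : ∀ e, (Finset.univ.filter fun x => g x = e).card = K e := by
      have := (Finset.mem_filter.mp (hS ▸ hg)).2
      exact this
    have hsum : ∑ σ ∈ Finset.univ.filter (fun σ : Equiv.Perm E => (fun x => c (σ x)) = g),
        (∏ i, C i (c (σ i)))
        = ∑ σ ∈ Finset.univ.filter (fun σ : Equiv.Perm E => (fun x => c (σ x)) = g),
        (∏ e, C e (g e)) := by
      refine Finset.sum_congr rfl fun σ hσ => ?_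
      have hσ' := (Finset.mem_filter.mp hσ).2
      exact Finset.prod_congr rfl fun i _ => by rw [congrFun hσ' i]
    rw [hsum, Finset.sum_const, nsmul_eq_mul]
    congr 1
    have hfe : (Finset.univ.filter fun σ : Equiv.Perm E => (fun x => c (σ x)) = g)
        = (Finset.univ.filter fun σ : Equiv.Perm E => ∀ x, c (σ x) = g x) :=
      Finset.filter_congr fun σ _ => by
        constructor
        · exact fun h x => congrFun h x
        · exact fun h => funext h
    rw [hfe, count_perm c g K hc hgK]
  rw [hper, hgroup, ← Finset.mul_sum, ← mul_assoc, inv_mul_cancel₀, one_mul]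
  exact_mod_cast Nat.cast_ne_zero.mpr (Finset.prod_ne_zero_iff.mpr fun e _ => (Nat.factorial_pos (K e)).ne')
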